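/- Let S ⊂ Z_{>0} be a nonempty finite set of positive integers with m = max(S). Then for all integers n ≥ m + 1, D_S(n,q) = Σ_{k=0}^{m} b_k(S;q) · [n−k choose m−k+1]_q, where b_0(S;q) = 0 and for k ≥ 1, b_k(S;q) = Σ q^{ℓ(π)}, the sum being over all π ∈ A(S; m+1) with π(m+1) = k. -/

import Mathlib

open Polynomial Finset

noncomputable section

/-- The number of inversions (the Coxeter length) of a permutation of `Fin n`. -/
def invNum {n : ℕ} (π : Equiv.Perm (Fin n)) : ℕ :=
  (Finset.univ.filter fun p : Fin n × Fin n => p.1 < p.2 ∧ π p.2 < π p.1).card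

/-- The descent set of a permutation, as a set of positive integers (1-indexed positions):
`i ∈ Des(π)` iff `1 ≤ i ≤ n-1` and `π_i > π_{i+1}` in one-line notation. -/
def DesSet {n : ℕ} (π : Equiv.Perm (Fin n)) : Finset ℕ :=
  (Finset.univ.filter fun a : Fin n => ∃ b : Fin n, (a : ℕ) + 1 = (b : ℕ) ∧ π b < π a).image
    fun a : Fin n => (a : ℕ) + 1

/-- The peak set of a permutation (1-indexed positions):
`i ∈ Peak(π)` iff `2 ≤ i ≤ n-1` and `π_{i-1} < π_i > π_{i+1}` in one-line notation. -/
def PeakSet {n : ℕ} (π : Equiv.Perm (Fin n)) : Finset ℕ :=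
  (Finset.univ.filter fun b : Fin n =>
      ∃ a c : Fin n, (a : ℕ) + 1 = (b : ℕ) ∧ (b : ℕ) + 1 = (c : ℕ) ∧ π a < π b ∧ π c < π b).image
    fun b : Fin n => (b : ℕ) + 1

/-- The q-integer `[j]_q = 1 + q + ⋯ + q^(j-1)`. -/
def qNum (j : ℕ) : Polynomial ℝ := ∑ i ∈ Finset.range j, X ^ i

/-- The q-factorial `[n]!_q = [1]_q [2]_q ⋯ [n]_q`. -/
def qFactorial : ℕ → Polynomial ℝ
  | 0 => 1
  | n + 1 => qFactorial n * qNum (n + 1)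

/-- The q-binomial coefficient `[n choose k]_q = [n]!_q / ([k]!_q [n-k]!_q)`.
(The divisor is monic and the division is exact, so `divByMonic` gives the true quotient.) -/
def qBinom (n k : ℕ) : Polynomial ℝ :=
  qFactorial n /ₘ (qFactorial k * qFactorial (n - k))

/-- `(−q;q)_k = (1+q)(1+q²)⋯(1+q^k)`. -/
def qPoch (k : ℕ) : Polynomial ℝ := ∏ i ∈ Finset.range k, (1 + X ^ (i + 1))

/-- `D_S(n,q) = Σ_{π ∈ 𝔖_n, Des(π) = S} q^{ℓ(π)}`. -/
def Dpoly (S : Finset ℕ) (n : ℕ) : Polynomial ℝ :=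
  ∑ π ∈ Finset.univ.filter (fun π : Equiv.Perm (Fin n) => DesSet π = S), X ^ invNum π

/-- `P_S(n,q) = Σ_{π ∈ 𝔖_n, Peak(π) = S} q^{ℓ(π)}`. -/
def Ppoly (S : Finset ℕ) (n : ℕ) : Polynomial ℝ :=
  ∑ π ∈ Finset.univ.filter (fun π : Equiv.Perm (Fin n) => PeakSet π = S), X ^ invNum π

/-- `Q_S(n,q) = Σ_{π ∈ 𝔖_n, Peak(π) ⊇ S} q^{ℓ(π)}`. -/
def Qpoly (S : Finset ℕ) (n : ℕ) : Polynomial ℝ :=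
  ∑ π ∈ Finset.univ.filter (fun π : Equiv.Perm (Fin n) => S ⊆ PeakSet π), X ^ invNum π

/-- The sequence `(a i)` for `lo ≤ i ≤ hi` is strongly q-log concave: it has no internal
zeroes and `a i * a j - a (i-1) * a (j+1)` has nonnegative coefficients for `lo < i ≤ j < hi`. -/
def StronglyQLogConcave (lo hi : ℕ) (a : ℕ → Polynomial ℝ) : Prop :=
  (∀ i j l : ℕ, lo ≤ i → i < j → j < l → l ≤ hi → a i ≠ 0 → a l ≠ 0 → a j ≠ 0) ∧
  ∀ i j : ℕ, lo < i → i ≤ j → j < hi → ∀ m : ℕ,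
    0 ≤ (a i * a j - a (i - 1) * a (j + 1)).coeff m


lemma qNum_succ (j : ℕ) : qNum (j + 1) = qNum j + X ^ j := by
  simp [qNum, Finset.sum_range_succ]

lemma qNum_monic (j : ℕ) : (qNum (j + 1)).Monic := by
  rw [qNum_succ, add_comm]
  refine monic_X_pow_add ?_
  refine lt_of_le_of_lt (degree_sum_le _ _) ?_
  rw [Finset.sup_lt_iff (by exact_mod_cast WithBot.bot_lt_coe j)]
  intro i hi
  exact lt_of_le_of_lt (degree_X_pow_le i) (by exact_mod_cast Finset.mem_range.mp hi)

lemma qFactorial_monic (n : ℕ) : (qFactorial n).Monic := by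
  induction n with
  | zero => exact monic_one
  | succ n ih => exact ih.mul (qNum_monic n)

lemma qNum_add (a b : ℕ) : qNum (a + b) = qNum a + X ^ a * qNum b := by
  induction b with
  | zero => simp [qNum]
  | succ b ih =>
      rw [← add_assoc, qNum_succ, ih, qNum_succ, mul_add, ← pow_add, add_assoc]

def gb : ℕ → ℕ → Polynomial ℝ
  | _, 0 => 1
  | 0, _ + 1 => 0
  | n + 1, k + 1 => X ^ (n - k) * gb n k + gb n (k + 1)

lemma gb_zero_right (n : ℕ) : gb n 0 = 1 := by cases n <;> rfl

lemma gb_eq_zero : ∀ {n k : ℕ}, n < k → gb n k = 0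
  | 0, _ + 1, _ => rfl
  | n + 1, k + 1, h => by
      rw [gb, gb_eq_zero (by omega), gb_eq_zero (by omega), mul_zero, add_zero]

lemma gb_self : ∀ n, gb n n = 1
  | 0 => rfl
  | n + 1 => by simp [gb, gb_self n, gb_eq_zero (show n < n + 1 by omega)]

lemma gb_mul_qfact : ∀ n k : ℕ, k ≤ n →
    gb n k * (qFactorial k * qFactorial (n - k)) = qFactorial n := by
  intro n
  induction n with
  | zero => intro k hk; interval_cases k; simp [gb_zero_right, qFactorial]
  | succ n ih =>
      intro k hk
      match k with
      | 0 => simp [gb_zero_right, qFactorial]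
      | k + 1 =>
        by_cases hkn : k + 1 ≤ n
        · rw [gb]
          have h1 : gb n k * (qFactorial k * qFactorial (n - k)) = qFactorial n :=
            ih k (by omega)
          have h2 : gb n (k + 1) * (qFactorial (k + 1) * qFactorial (n - (k + 1))) =
              qFactorial n := ih (k + 1) hkn
          have hnk : n - k = (n - (k + 1)) + 1 := by omega
          have hq : qNum (n + 1) = qNum (n - k) + X ^ (n - k) * qNum (k + 1) := by
            have := qNum_add (n - k) (k + 1)
            rw [← this]; congr 1; omega
          have e1 : n + 1 - (k + 1) = n - k := by omega
          have eB : qFactorial (n - k) = qFactorial (n - (k + 1)) * qNum (n - k) := by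
            rw [hnk]
            show qFactorial (n - (k+1)) * qNum (n - (k+1) + 1) = _
            rw [← hnk]
          have eC : qFactorial (k + 1) = qFactorial k * qNum (k + 1) := rfl
          have eD : qFactorial (n + 1) = qFactorial n * qNum (n + 1) := rfl
          rw [eB] at h1
          rw [eC] at h2
          rw [e1, eB, eC, eD, hq]
          linear_combination (X ^ (n - k) * qNum (k + 1)) * h1 + qNum (n - k) * h2
        · have hk1 : k = n := by omega
          subst hk1
          rw [gb_self, Nat.sub_self, one_mul]
          show qFactorial (k+1) * (qFactorial 0) = _
          simp [qFactorial]

lemma qBinom_eq_gb {n k : ℕ} (h : k ≤ n) : qBinom n k = gb n k := by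
  have hmo : (qFactorial k * qFactorial (n - k)).Monic :=
    (qFactorial_monic k).mul (qFactorial_monic (n - k))
  rw [qBinom, ← gb_mul_qfact n k h, mul_comm, mul_divByMonic_cancel_left _ hmo]

def gstep (m k : ℕ) : ℕ → ℕ → Polynomial ℝ
  | 0, j => if j = k then 1 else 0
  | t + 1, j => X ^ (m + t + 2 - j) * ∑ i ∈ Finset.range j, gstep m k t i

lemma gsum (m k : ℕ) : ∀ t r, r ≤ m + 2 + t →
    ∑ i ∈ Finset.range r, gstep m k t i =
    if t + k + 1 ≤ r then X ^ ((m + 2 + t - r) * t) * gb (r - 1 - k) (r - 1 - k - t)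
    else 0 := by
  intro t
  induction t with
  | zero =>
      intro r _
      have : ∑ i ∈ Finset.range r, gstep m k 0 i
          = ∑ i ∈ Finset.range r, (if i = k then (1 : Polynomial ℝ) else 0) := rfl
      rw [this, Finset.sum_ite_eq' (Finset.range r) k (fun _ => (1 : Polynomial ℝ))]
      by_cases h : 0 + k + 1 ≤ r
      · rw [if_pos (Finset.mem_range.mpr (by omega)), if_pos h]
        simp [gb_self]
      · rw [if_neg (fun hc => h (by simpa using Nat.succ_le_of_lt (Finset.mem_range.mp hc))),
          if_neg h]
  | succ t ih =>
      intro r hr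
      induction r with
      | zero => simp
      | succ r ihr =>
          have hr' : r ≤ m + 2 + t := by omega
          rw [Finset.sum_range_succ, ihr (by omega)]
          show _ + X ^ (m + t + 2 - r) * ∑ i ∈ Finset.range r, gstep m k t i = _
          rw [ih r hr']
          rcases lt_trichotomy r (t + k + 1) with hc | hc | hc
          · rw [if_neg (by omega), if_neg (by omega), if_neg (by omega), mul_zero, add_zero]
          · rw [if_neg (by omega), if_pos (by omega), if_pos (by omega), zero_add]
            rw [show r + 1 - 1 - k - (t + 1) = 0 by omega, show r + 1 - 1 - k = t + 1 by omega,
              show r - 1 - k - t = 0 by omega, show r - 1 - k = t by omega,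
              gb_zero_right, gb_zero_right, mul_one, mul_one,
              show m + 2 + (t + 1) - (r + 1) = m + 1 - k by omega,
              show m + t + 2 - r = m + 1 - k by omega,
              show m + 2 + t - r = m + 1 - k by omega, ← pow_add]
            congr 1
            ring
          · rw [if_pos (by omega), if_pos (by omega), if_pos (by omega)]
            obtain ⟨N, hN⟩ : ∃ N, r - k = N + 1 := ⟨r - k - 1, by omega⟩
            obtain ⟨s, hs⟩ : ∃ s, r - k - t - 1 = s + 1 := ⟨r - k - t - 2, by omega⟩
            have key : gb (N + 1) (s + 1) = X ^ (t + 1) * gb N s + gb N (s + 1) := by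
              show X ^ (N - s) * gb N s + gb N (s + 1) = _
              rw [show N - s = t + 1 by omega]
            rw [show r - 1 - k - (t + 1) = s by omega, show r - 1 - k - t = s + 1 by omega,
              show r - 1 - k = N by omega,
              show r + 1 - 1 - k - (t + 1) = s + 1 by omega,
              show r + 1 - 1 - k = N + 1 by omega,
              show m + 2 + (t + 1) - (r + 1) = m + 2 + t - r by omega,
              show m + 2 + (t + 1) - r = (m + 2 + t - r) + 1 by omega,
              show m + t + 2 - r = m + 2 + t - r by omega, key]
            ring

/- ### tau -/

def tauFun {M : ℕ} (v : Fin (M + 1)) (x : Fin (M + 1)) : Fin (M + 1) :=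
  if x.val < v.val then x
  else if v.val < x.val then ⟨x.val - 1, by omega⟩
  else Fin.last M

def tauInv {M : ℕ} (v : Fin (M + 1)) (y : Fin (M + 1)) : Fin (M + 1) :=
  if y.val < v.val then y
  else if h : y.val = M then v
  else ⟨y.val + 1, by have := y.isLt; omega⟩

lemma tauFun_lt {M : ℕ} (v x : Fin (M + 1)) (h : x.val < v.val) : tauFun v x = x := by
  rw [tauFun, if_pos h]

lemma tauFun_self {M : ℕ} (v : Fin (M + 1)) : tauFun v v = Fin.last M := by
  rw [tauFun, if_neg (by omega), if_neg (by omega)]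

lemma tauFun_gt {M : ℕ} (v x : Fin (M + 1)) (h : v.val < x.val) :
    tauFun v x = ⟨x.val - 1, by omega⟩ := by
  rw [tauFun, if_neg (by omega), if_pos h]

lemma tauInv_lt {M : ℕ} (v y : Fin (M + 1)) (h : y.val < v.val) : tauInv v y = y := by
  rw [tauInv, if_pos h]

lemma tauInv_last {M : ℕ} (v : Fin (M + 1)) : tauInv v (Fin.last M) = v := by
  rw [tauInv, if_neg (by simp [Fin.val_last]; omega), dif_pos (by simp [Fin.val_last])]

lemma tauInv_mid {M : ℕ} (v y : Fin (M + 1)) (h1 : ¬ y.val < v.val) (h2 : y.val ≠ M) :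
    tauInv v y = ⟨y.val + 1, by have := y.isLt; omega⟩ := by
  rw [tauInv, if_neg h1, dif_neg h2]

def tau {M : ℕ} (v : Fin (M + 1)) : Equiv.Perm (Fin (M + 1)) where
  toFun := tauFun v
  invFun := tauInv v
  left_inv x := by
    rcases lt_trichotomy x.val v.val with h | h | h
    · rw [tauFun_lt v x h, tauInv_lt v x h]
    · have hx : x = v := Fin.ext h
      subst hx
      rw [tauFun_self, tauInv_last]
    · rw [tauFun_gt v x h]
      rw [tauInv_mid v _ (by show ¬ x.val - 1 < v.val; omega)
        (by show x.val - 1 ≠ M; have := x.isLt; omega)]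
      apply Fin.ext
      show x.val - 1 + 1 = x.val
      omega
  right_inv y := by
    rcases lt_trichotomy y.val v.val with h | h | h
    · rw [tauInv_lt v y h, tauFun_lt v y h]
    · by_cases hM : y.val = M
      · have : y = Fin.last M := Fin.ext (by simp [Fin.val_last, hM])
        subst this
        rw [tauInv_last, tauFun_self]
      · rw [tauInv_mid v y (by omega) hM, tauFun_gt v _ (by show v.val < y.val + 1; omega)]
        apply Fin.ext
        show y.val + 1 - 1 = y.val
        omega
    · by_cases hM : y.val = M
      · have : y = Fin.last M := Fin.ext (by simp [Fin.val_last, hM])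
        subst this
        rw [tauInv_last, tauFun_self]
      · rw [tauInv_mid v y (by omega) hM, tauFun_gt v _ (by show v.val < y.val + 1; omega)]
        apply Fin.ext
        show y.val + 1 - 1 = y.val
        omega

lemma tau_lt {M : ℕ} (v x : Fin (M + 1)) (h : x.val < v.val) : tau v x = x :=
  tauFun_lt v x h

lemma tau_self {M : ℕ} (v : Fin (M + 1)) : tau v v = Fin.last M :=
  tauFun_self v

lemma tau_gt {M : ℕ} (v x : Fin (M + 1)) (h : v.val < x.val) :
    (tau v x).val = x.val - 1 := by
  show (tauFun v x).val = _
  rw [tauFun_gt v x h]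

lemma tau_val {M : ℕ} (v x : Fin (M + 1)) (h : x ≠ v) :
    (tau v x).val = if x.val < v.val then x.val else x.val - 1 := by
  rcases lt_trichotomy x.val v.val with h1 | h1 | h1
  · rw [if_pos h1]; exact congrArg Fin.val (tau_lt v x h1)
  · exact absurd (Fin.ext h1) h
  · rw [if_neg (by omega)]; exact tau_gt v x h1

lemma tau_order_iff {M : ℕ} (v x y : Fin (M + 1)) (hx : x ≠ v) (hy : y ≠ v) :
    tau v x < tau v y ↔ x < y := by
  have hxv : x.val ≠ v.val := fun hh => hx (Fin.ext hh)
  have hyv : y.val ≠ v.val := fun hh => hy (Fin.ext hh)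
  rw [Fin.lt_iff_val_lt_val, Fin.lt_iff_val_lt_val, tau_val v x hx, tau_val v y hy]
  split_ifs <;> omega

lemma tau_inv_lt {M : ℕ} (v y : Fin (M + 1)) (h : y.val < v.val) : (tau v)⁻¹ y = y := by
  nth_rewrite 1 [← tau_lt v y h]
  exact Equiv.symm_apply_apply _ _

lemma tau_inv_last {M : ℕ} (v : Fin (M + 1)) : (tau v)⁻¹ (Fin.last M) = v := by
  rw [← tau_self v]
  exact Equiv.symm_apply_apply _ _

/- ### extend/restrict -/

def extendLast {M : ℕ} (σ : Equiv.Perm (Fin M)) : Equiv.Perm (Fin (M + 1)) where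
  toFun i := if h : i = Fin.last M then Fin.last M else (σ (i.castPred h)).castSucc
  invFun i := if h : i = Fin.last M then Fin.last M else (σ⁻¹ (i.castPred h)).castSucc
  left_inv i := by
    by_cases h : i = Fin.last M
    · simp [h]
    · simp only [dif_neg h]
      rw [dif_neg (Fin.castSucc_lt_last _).ne]
      simp
  right_inv i := by
    by_cases h : i = Fin.last M
    · simp [h]
    · simp only [dif_neg h]
      rw [dif_neg (Fin.castSucc_lt_last _).ne]
      simp

lemma extendLast_castSucc {M : ℕ} (σ : Equiv.Perm (Fin M)) (i : Fin M) :
    extendLast σ i.castSucc = (σ i).castSucc := by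
  show (if h : i.castSucc = Fin.last M then Fin.last M
    else (σ (i.castSucc.castPred h)).castSucc) = _
  rw [dif_neg (Fin.castSucc_lt_last _).ne]
  simp

lemma extendLast_last {M : ℕ} (σ : Equiv.Perm (Fin M)) :
    extendLast σ (Fin.last M) = Fin.last M := by
  show (if h : Fin.last M = Fin.last M then Fin.last M else _) = _
  rw [dif_pos rfl]

def restrictLast {M : ℕ} (π : Equiv.Perm (Fin (M + 1)))
    (hπ : π (Fin.last M) = Fin.last M) : Equiv.Perm (Fin M) where
  toFun i := (π i.castSucc).castPred (fun h =>
    (Fin.castSucc_lt_last i).ne (π.injective (h.trans hπ.symm)))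
  invFun i := (π⁻¹ i.castSucc).castPred (fun h =>
    (Fin.castSucc_lt_last i).ne (by
      have := congrArg π h
      rwa [Equiv.Perm.inv_def, Equiv.apply_symm_apply, hπ] at this))
  left_inv i := by
    apply Fin.castSucc_injective
    simp
  right_inv i := by
    apply Fin.castSucc_injective
    simp

lemma restrictLast_spec {M : ℕ} (π : Equiv.Perm (Fin (M + 1)))
    (hπ : π (Fin.last M) = Fin.last M) (i : Fin M) :
    (restrictLast π hπ i).castSucc = π i.castSucc := rfl

lemma restrictLast_extendLast {M : ℕ} (σ : Equiv.Perm (Fin M))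
    (h : extendLast σ (Fin.last M) = Fin.last M) :
    restrictLast (extendLast σ) h = σ := by
  refine Equiv.ext fun i => Fin.castSucc_injective _ ?_
  rw [restrictLast_spec, extendLast_castSucc]

/- ### DesSet helpers -/

lemma mem_DesSet {n : ℕ} (π : Equiv.Perm (Fin n)) (l : ℕ) :
    l ∈ DesSet π ↔ ∃ a b : Fin n, (a : ℕ) + 1 = (b : ℕ) ∧ π b < π a ∧ (a : ℕ) + 1 = l := by
  simp only [DesSet, Finset.mem_image, Finset.mem_filter, Finset.mem_univ, true_and]
  constructor
  · rintro ⟨a, ⟨b, h1, h2⟩, h3⟩; exact ⟨a, b, h1, h2, h3⟩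
  · rintro ⟨a, b, h1, h2, h3⟩; exact ⟨a, ⟨b, h1, h2⟩, h3⟩

/- ### Fmap -/

section Bij

variable {N : ℕ}

def vOf (π : Equiv.Perm (Fin (N + 2))) : Fin (N + 2) := π (Fin.last (N + 1))

def Fmap (π : Equiv.Perm (Fin (N + 2))) : Equiv.Perm (Fin (N + 1)) :=
  restrictLast (π.trans (tau (vOf π))) (by
    show tau (vOf π) (π (Fin.last (N + 1))) = _
    exact tau_self _)

lemma Fmap_spec (π : Equiv.Perm (Fin (N + 2))) (i : Fin (N + 1)) :
    (Fmap π i).castSucc = tau (vOf π) (π i.castSucc) :=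
  restrictLast_spec _ _ i

lemma apply_ne_v (π : Equiv.Perm (Fin (N + 2))) (x : Fin (N + 2))
    (hx : x ≠ Fin.last (N + 1)) : π x ≠ vOf π :=
  fun h => hx (π.injective h)

lemma Fmap_ord (π : Equiv.Perm (Fin (N + 2))) (a b : Fin (N + 1)) :
    Fmap π b < Fmap π a ↔ π b.castSucc < π a.castSucc := by
  rw [← Fin.castSucc_lt_castSucc_iff, Fmap_spec, Fmap_spec,
    tau_order_iff _ _ _ (apply_ne_v _ _ (Fin.castSucc_lt_last _).ne)
      (apply_ne_v _ _ (Fin.castSucc_lt_last _).ne)]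

lemma Fmap_des (π : Equiv.Perm (Fin (N + 2)))
    (hlast : ¬ π (Fin.last (N + 1)) < π ((Fin.last N).castSucc)) :
    DesSet (Fmap π) = DesSet π := by
  ext l
  rw [mem_DesSet, mem_DesSet]
  constructor
  · rintro ⟨a, b, h1, h2, h3⟩
    refine ⟨a.castSucc, b.castSucc, ?_, (Fmap_ord π a b).mp h2, ?_⟩
    · rwa [Fin.coe_castSucc, Fin.coe_castSucc]
    · rwa [Fin.coe_castSucc]
  · rintro ⟨a, b, h1, h2, h3⟩
    have hb : b ≠ Fin.last (N + 1) := by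
      intro hbl
      subst hbl
      have ha : a = (Fin.last N).castSucc := by
        apply Fin.ext
        have := Fin.val_last (N + 1)
        simp only [Fin.coe_castSucc, Fin.val_last]
        omega
      exact hlast (ha ▸ h2)
    have hbval : b.val < N + 1 := by
      have := Fin.val_lt_last hb
      omega
    have ha : a ≠ Fin.last (N + 1) := by
      intro hal
      rw [hal] at h1
      simp only [Fin.val_last] at h1
      omega
    refine ⟨a.castPred ha, b.castPred hb, ?_, ?_, ?_⟩
    · simpa using h1
    · rw [Fmap_ord, Fin.castSucc_castPred, Fin.castSucc_castPred]
      exact h2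
    · simpa using h3

lemma vOf_val_le (π : Equiv.Perm (Fin (N + 2))) : (vOf π).val ≤ N + 1 := by
  have := (vOf π).isLt; omega

lemma Fmap_inv (π : Equiv.Perm (Fin (N + 2))) :
    invNum π = invNum (Fmap π) + (N + 1 - (vOf π).val) := by
  classical
  have hsplit := Finset.card_filter_add_card_filter_not
    (s := Finset.univ.filter fun p : Fin (N + 2) × Fin (N + 2) => p.1 < p.2 ∧ π p.2 < π p.1)
    (fun p => p.2 = Fin.last (N + 1))
  rw [invNum, ← hsplit]
  have hcard2 : (((Finset.univ.filter fun p : Fin (N + 2) × Fin (N + 2) =>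
      p.1 < p.2 ∧ π p.2 < π p.1)).filter fun p => ¬ p.2 = Fin.last (N + 1)).card
      = invNum (Fmap π) := by
    rw [invNum]
    refine Finset.card_bij'
      (i := fun p hp => ((p.1.castPred ?_), (p.2.castPred ?_)))
      (j := fun q hq => (q.1.castSucc, q.2.castSucc)) ?_ ?_ ?_ ?_
    · -- p.1 ≠ last
      simp only [Finset.mem_filter, Finset.mem_univ, true_and] at hp
      intro h
      have h2 : p.1 < p.2 := hp.1.1
      rw [h] at h2
      exact absurd (Fin.le_last p.2) (not_le.mpr h2)
    · simp only [Finset.mem_filter, Finset.mem_univ, true_and] at hp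
      exact hp.2
    · intro p hp
      simp only [Finset.mem_filter, Finset.mem_univ, true_and] at hp ⊢
      constructor
      · rw [← Fin.castSucc_lt_castSucc_iff, Fin.castSucc_castPred, Fin.castSucc_castPred]
        exact hp.1.1
      · rw [Fmap_ord, Fin.castSucc_castPred, Fin.castSucc_castPred]
        exact hp.1.2
    · intro q hq
      simp only [Finset.mem_filter, Finset.mem_univ, true_and] at hq ⊢
      refine ⟨⟨?_, ?_⟩, (Fin.castSucc_lt_last _).ne⟩
      · rw [Fin.castSucc_lt_castSucc_iff]; exact hq.1
      · rw [← Fmap_ord]; exact hq.2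
    · intro p hp
      apply Prod.ext <;> simp
    · intro q hq
      apply Prod.ext <;> simp
  have hcard1 : (((Finset.univ.filter fun p : Fin (N + 2) × Fin (N + 2) =>
      p.1 < p.2 ∧ π p.2 < π p.1)).filter fun p => p.2 = Fin.last (N + 1)).card
      = N + 1 - (vOf π).val := by
    have : (((Finset.univ.filter fun p : Fin (N + 2) × Fin (N + 2) =>
        p.1 < p.2 ∧ π p.2 < π p.1)).filter fun p => p.2 = Fin.last (N + 1)).card
        = (Finset.Ioi (vOf π)).card := by
      refine Finset.card_nbij (i := fun p => π p.1) ?_ ?_ ?_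
      · intro p hp
        simp only [Finset.mem_coe, Finset.mem_filter, Finset.mem_univ, true_and] at hp
        rw [Finset.mem_coe, Finset.mem_Ioi]
        rw [hp.2] at hp
        exact hp.1.2
      · intro p hp q hq hpq
        simp only [Finset.coe_filter, Set.mem_setOf_eq, Finset.mem_filter] at hp hq
        have h1 : p.1 = q.1 := π.injective hpq
        apply Prod.ext
        · exact h1
        · rw [hp.2, hq.2]
      · intro y hy
        simp only [Finset.coe_Ioi, Set.mem_Ioi] at hy
        refine ⟨(π⁻¹ y, Fin.last (N + 1)), ?_, by simp⟩
        simp only [Finset.mem_coe, Finset.mem_filter, Finset.mem_univ, true_and]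
        have hne : π⁻¹ y ≠ Fin.last (N + 1) := by
          intro h
          have : y = vOf π := by
            rw [vOf, ← h, Equiv.Perm.inv_def, Equiv.apply_symm_apply]
          rw [this] at hy
          exact lt_irrefl _ hy
        refine ⟨⟨(Fin.le_last _).lt_of_ne hne, ?_⟩, trivial⟩
        rw [Equiv.Perm.inv_def, Equiv.apply_symm_apply]
        exact hy
    rw [this, Fin.card_Ioi]
    rfl
  rw [hcard1, hcard2]
  ring

lemma Gmap_last (w : Fin (N + 2)) (π' : Equiv.Perm (Fin (N + 1))) :
    ((extendLast π').trans (tau w)⁻¹) (Fin.last (N + 1)) = w := by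
  rw [Equiv.trans_apply, extendLast_last, tau_inv_last]

lemma Gmap_castSucc (w : Fin (N + 2)) (π' : Equiv.Perm (Fin (N + 1))) (i : Fin (N + 1)) :
    ((extendLast π').trans (tau w)⁻¹) i.castSucc = (tau w)⁻¹ ((π' i).castSucc) := by
  rw [Equiv.trans_apply, extendLast_castSucc]

lemma vOf_Gmap (w : Fin (N + 2)) (π' : Equiv.Perm (Fin (N + 1))) :
    vOf ((extendLast π').trans (tau w)⁻¹) = w := Gmap_last w π'

lemma Fmap_Gmap (w : Fin (N + 2)) (π' : Equiv.Perm (Fin (N + 1))) :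
    Fmap ((extendLast π').trans (tau w)⁻¹) = π' := by
  refine Equiv.ext fun i => Fin.castSucc_injective _ ?_
  rw [Fmap_spec, vOf_Gmap, Gmap_castSucc, Equiv.Perm.inv_def, Equiv.apply_symm_apply]

lemma Gmap_Fmap (w : Fin (N + 2)) (π : Equiv.Perm (Fin (N + 2))) (hvw : vOf π = w) :
    (extendLast (Fmap π)).trans (tau w)⁻¹ = π := by
  refine Equiv.ext fun x => ?_
  induction x using Fin.lastCases with
  | last => rw [Gmap_last, ← hvw]; rfl
  | cast i =>
      rw [Gmap_castSucc, Fmap_spec, hvw, Equiv.Perm.inv_def, Equiv.symm_apply_apply]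

lemma L3 (S : Finset ℕ) (N : ℕ) (hSN : ∀ l ∈ S, l ≤ N) (j : ℕ) (hj1 : 1 ≤ j)
    (hj2 : j ≤ N + 2) :
    ∑ π ∈ Finset.univ.filter (fun π : Equiv.Perm (Fin (N + 2)) =>
        DesSet π = S ∧ (π (Fin.last (N + 1)) : ℕ) + 1 = j), (X : Polynomial ℝ) ^ invNum π
    = X ^ (N + 2 - j) *
      ∑ π' ∈ Finset.univ.filter (fun π' : Equiv.Perm (Fin (N + 1)) =>
        DesSet π' = S ∧ (π' (Fin.last N) : ℕ) + 1 < j), X ^ invNum π' := by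
  classical
  rw [Finset.mul_sum]
  set w : Fin (N + 2) := ⟨j - 1, by omega⟩ with hw
  have hwval : w.val = j - 1 := rfl
  have hlast_of_mem : ∀ π : Equiv.Perm (Fin (N + 2)), DesSet π = S →
      ¬ π (Fin.last (N + 1)) < π ((Fin.last N).castSucc) := by
    intro π hDes hd
    have hmem : (N + 1) ∈ DesSet π := by
      rw [mem_DesSet]
      refine ⟨(Fin.last N).castSucc, Fin.last (N + 1), ?_, hd, ?_⟩
      · simp
      · simp
    rw [hDes] at hmem
    exact absurd (hSN _ hmem) (by omega)
  refine Finset.sum_bij' (i := fun π _ => Fmap π)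
    (j := fun π' _ => (extendLast π').trans (tau w)⁻¹) ?_ ?_ ?_ ?_ ?_
  · -- hi : Fmap π in small set
    intro π hπ
    simp only [Finset.mem_filter, Finset.mem_univ, true_and] at hπ ⊢
    obtain ⟨hDes, hstat⟩ := hπ
    have hlast := hlast_of_mem π hDes
    constructor
    · rw [Fmap_des π hlast, hDes]
    · -- stat of Fmap π
      have hu : π ((Fin.last N).castSucc) ≠ vOf π :=
        apply_ne_v _ _ (Fin.castSucc_lt_last _).ne
      have huv : (π ((Fin.last N).castSucc)).val < (vOf π).val := by
        have h1 : ¬ (vOf π).val < (π ((Fin.last N).castSucc)).val := by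
          intro hc
          exact hlast (Fin.lt_iff_val_lt_val.mpr hc)
        have h2 : (π ((Fin.last N).castSucc)).val ≠ (vOf π).val :=
          fun hh => hu (Fin.ext hh)
        omega
      have hspec := Fmap_spec π (Fin.last N)
      rw [tau_lt _ _ huv] at hspec
      have hval : (Fmap π (Fin.last N)).val = (π ((Fin.last N).castSucc)).val := by
        rw [← Fin.coe_castSucc, hspec]
      have hvOf : (vOf π).val + 1 = j := hstat
      omega
  · -- hj : Gmap π' in big set
    intro π' hπ'
    simp only [Finset.mem_filter, Finset.mem_univ, true_and] at hπ' ⊢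
    obtain ⟨hDes, hstat⟩ := hπ'
    have hlast' : ¬ ((extendLast π').trans (tau w)⁻¹) (Fin.last (N + 1)) <
        ((extendLast π').trans (tau w)⁻¹) ((Fin.last N).castSucc) := by
      rw [Gmap_last, Gmap_castSucc]
      have hval : ((π' (Fin.last N)).castSucc).val < w.val := by
        rw [Fin.coe_castSucc, hwval]; omega
      rw [tau_inv_lt _ _ hval]
      intro hc
      rw [Fin.lt_iff_val_lt_val, Fin.coe_castSucc] at hc
      omega
    constructor
    · have := Fmap_des _ hlast'
      rw [Fmap_Gmap] at this
      rw [← this, hDes]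
    · rw [Gmap_last, hwval]
      omega
  · intro π hπ
    simp only [Finset.mem_filter, Finset.mem_univ, true_and] at hπ
    refine Gmap_Fmap w π (Fin.ext ?_)
    rw [hwval]
    have h2 : ((vOf π : Fin (N + 2)) : ℕ) + 1 = j := hπ.2
    omega
  · intro π' _
    exact Fmap_Gmap w π'
  · intro π hπ
    simp only [Finset.mem_filter, Finset.mem_univ, true_and] at hπ
    show (X : Polynomial ℝ) ^ invNum π = X ^ (N + 2 - j) * X ^ invNum (Fmap π)
    rw [← pow_add]
    congr 1
    have h1 := Fmap_inv π
    have h2 : ((vOf π : Fin (N + 2)) : ℕ) + 1 = j := hπ.2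
    have h3 := vOf_val_le π
    omega

end Bij

lemma sum_filter_stat {α : Type*} [Fintype α] [DecidableEq α] (P : α → Prop) [DecidablePred P]
    (stat : α → ℕ) (f : α → Polynomial ℝ) (r : ℕ) :
    ∑ j ∈ Finset.range r, ∑ x ∈ Finset.univ.filter (fun x => P x ∧ stat x = j), f x
    = ∑ x ∈ Finset.univ.filter (fun x => P x ∧ stat x < r), f x := by
  classical
  calc ∑ j ∈ Finset.range r, ∑ x ∈ Finset.univ.filter (fun x => P x ∧ stat x = j), f x
      = ∑ j ∈ Finset.range r, ∑ x : α, if P x ∧ stat x = j then f x else 0 :=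
        Finset.sum_congr rfl fun j _ => Finset.sum_filter _ _
    _ = ∑ x : α, ∑ j ∈ Finset.range r, (if P x ∧ stat x = j then f x else 0) :=
        Finset.sum_comm
    _ = ∑ x : α, (if P x ∧ stat x < r then f x else 0) := by
        refine Finset.sum_congr rfl fun x _ => ?_
        by_cases hP : P x
        · simp only [hP, true_and]
          rw [Finset.sum_ite_eq (Finset.range r) (stat x) (fun _ => f x)]
          simp only [Finset.mem_range]
        · simp [hP]
    _ = ∑ x ∈ Finset.univ.filter (fun x => P x ∧ stat x < r), f x :=
        (Finset.sum_filter _ _).symm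

lemma stat_ne_last {m : ℕ} (S : Finset ℕ) (hmS : m ∈ S)
    (π : Equiv.Perm (Fin (m + 1))) (hDes : DesSet π = S) :
    (π (Fin.last m) : ℕ) + 1 ≠ m + 1 := by
  intro hc
  have hlast : π (Fin.last m) = Fin.last m := Fin.ext (by
    rw [Fin.val_last]; omega)
  have hmem : m ∈ DesSet π := by rw [hDes]; exact hmS
  rw [mem_DesSet] at hmem
  obtain ⟨a, b, h1, h2, h3⟩ := hmem
  have hbv : (b : ℕ) = m := by omega
  have hb : b = Fin.last m := Fin.ext (by rw [Fin.val_last]; exact hbv)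
  rw [hb, hlast] at h2
  exact absurd (Fin.le_last (π a)) (not_le.mpr h2)

lemma master (S : Finset ℕ) (m : ℕ) (hm1 : 1 ≤ m) (hSm : ∀ l ∈ S, l ≤ m) (hmS : m ∈ S)
    (b : ℕ → Polynomial ℝ) (hb0 : b 0 = 0)
    (hb : ∀ j, 1 ≤ j → j ≤ m →
      b j = ∑ π ∈ Finset.univ.filter (fun π : Equiv.Perm (Fin (m + 1)) =>
          DesSet π = S ∧ (π (Fin.last m) : ℕ) + 1 = j),
        X ^ invNum π) :
    ∀ t j, j ≤ m + 1 + t →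
    ∑ π ∈ Finset.univ.filter (fun π : Equiv.Perm (Fin (m + t + 1)) =>
        DesSet π = S ∧ (π (Fin.last (m + t)) : ℕ) + 1 = j), (X : Polynomial ℝ) ^ invNum π
    = ∑ k ∈ Finset.range (m + 1), b k * gstep m k t j := by
  intro t
  induction t with
  | zero =>
      intro j hj
      have hRHS : ∑ k ∈ Finset.range (m + 1), b k * gstep m k 0 j
          = if j < m + 1 then b j else 0 := by
        have : ∀ k, b k * gstep m k 0 j = if j = k then b k else 0 := by
          intro k
          show b k * (if j = k then 1 else 0) = _
          split_ifs <;> simp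
        rw [Finset.sum_congr rfl fun k _ => this k]
        rw [Finset.sum_ite_eq (Finset.range (m + 1)) j (fun k => b k)]
        simp only [Finset.mem_range]
      rw [hRHS]
      rcases Nat.eq_zero_or_pos j with hj0 | hjpos
      · subst hj0
        rw [if_pos (by omega), hb0]
        rw [Finset.sum_eq_zero]
        intro π hπ
        simp only [Finset.mem_filter, Finset.mem_univ, true_and] at hπ
        omega
      · by_cases hjm : j ≤ m
        · rw [if_pos (by omega)]
          exact (hb j hjpos hjm).symm
        · have hjm1 : j = m + 1 := by omega
          rw [if_neg (by omega)]
          rw [Finset.sum_eq_zero]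
          intro π hπ
          simp only [Finset.mem_filter, Finset.mem_univ, true_and] at hπ
          exact absurd (hjm1 ▸ hπ.2) (stat_ne_last S hmS π hπ.1)
  | succ t ih =>
      intro j hj
      rcases Nat.eq_zero_or_pos j with hj0 | hjpos
      · subst hj0
        rw [Finset.sum_eq_zero (fun π hπ => by
          simp only [Finset.mem_filter, Finset.mem_univ, true_and] at hπ
          omega)]
        rw [Finset.sum_eq_zero]
        intro k _
        show b k * (X ^ (m + t + 2 - 0) * ∑ i ∈ Finset.range 0, gstep m k t i) = 0
        simp
      · have hL3 := L3 S (m + t) (fun l hl => le_trans (hSm l hl) (by omega)) j hjpos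
          (by omega)
        have : ∑ π ∈ Finset.univ.filter (fun π : Equiv.Perm (Fin (m + (t + 1) + 1)) =>
            DesSet π = S ∧ (π (Fin.last (m + (t + 1))) : ℕ) + 1 = j),
            (X : Polynomial ℝ) ^ invNum π
            = X ^ (m + t + 2 - j) *
              ∑ π' ∈ Finset.univ.filter (fun π' : Equiv.Perm (Fin (m + t + 1)) =>
                DesSet π' = S ∧ (π' (Fin.last (m + t)) : ℕ) + 1 < j), X ^ invNum π' := hL3
        rw [this]
        rw [← sum_filter_stat (fun π : Equiv.Perm (Fin (m + t + 1)) => DesSet π = S)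
          (fun π => (π (Fin.last (m + t)) : ℕ) + 1) (fun π => (X : Polynomial ℝ) ^ invNum π) j]
        have hinner : ∀ j' ∈ Finset.range j,
            ∑ π ∈ Finset.univ.filter (fun π : Equiv.Perm (Fin (m + t + 1)) =>
              DesSet π = S ∧ (π (Fin.last (m + t)) : ℕ) + 1 = j'), (X : Polynomial ℝ) ^ invNum π
            = ∑ k ∈ Finset.range (m + 1), b k * gstep m k t j' := by
          intro j' hj'
          exact ih j' (by have := Finset.mem_range.mp hj'; omega)
        rw [Finset.sum_congr rfl hinner, Finset.sum_comm]
        rw [Finset.mul_sum]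
        refine Finset.sum_congr rfl fun k _ => ?_
        show X ^ (m + t + 2 - j) * ∑ j' ∈ Finset.range j, b k * gstep m k t j'
          = b k * (X ^ (m + t + 2 - j) * ∑ i ∈ Finset.range j, gstep m k t i)
        rw [← Finset.mul_sum]
        ring

/-- the q-descent polynomial in the basis of q-binomial coefficients
`[n-k choose m-k+1]_q`:  `D_S(n,q) = Σ_{k=0}^m b_k(S;q) [n-k choose m-k+1]_q`. -/
theorem stmt3 (S : Finset ℕ) (hS : S.Nonempty) (hpos : ∀ s ∈ S, 0 < s)
    (m : ℕ) (hm : m = S.max' hS)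
    (b : ℕ → Polynomial ℝ) (hb0 : b 0 = 0)
    (hb : ∀ j, 1 ≤ j → j ≤ m →
      b j = ∑ π ∈ Finset.univ.filter (fun π : Equiv.Perm (Fin (m + 1)) =>
          DesSet π = S ∧ (π (Fin.last m) : ℕ) + 1 = j),
        X ^ invNum π)
    (n : ℕ) (hn : m + 1 ≤ n) :
    Dpoly S n = ∑ k ∈ Finset.range (m + 1), b k * qBinom (n - k) (m - k + 1) := by
  have hmS : m ∈ S := hm ▸ S.max'_mem hS
  have hSm : ∀ l ∈ S, l ≤ m := fun l hl => hm ▸ S.le_max' l hl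
  have hm1 : 1 ≤ m := hpos m hmS
  obtain ⟨t, rfl⟩ : ∃ t, n = m + t + 1 := ⟨n - m - 1, by omega⟩
  rw [Dpoly]
  have hfilter : Finset.univ.filter (fun π : Equiv.Perm (Fin (m + t + 1)) => DesSet π = S)
      = Finset.univ.filter (fun π : Equiv.Perm (Fin (m + t + 1)) =>
          DesSet π = S ∧ (π (Fin.last (m + t)) : ℕ) + 1 < m + t + 2) := by
    apply Finset.filter_congr
    intro π _
    constructor
    · intro hDes
      exact ⟨hDes, by have := (π (Fin.last (m + t))).isLt; omega⟩
    · exact fun h => h.1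
  rw [hfilter]
  rw [← sum_filter_stat (fun π : Equiv.Perm (Fin (m + t + 1)) => DesSet π = S)
    (fun π => (π (Fin.last (m + t)) : ℕ) + 1) (fun π => (X : Polynomial ℝ) ^ invNum π)
    (m + t + 2)]
  rw [Finset.sum_congr rfl (fun j hj =>
    master S m hm1 hSm hmS b hb0 hb t j (by
      have := Finset.mem_range.mp hj; omega))]
  rw [Finset.sum_comm]
  refine Finset.sum_congr rfl fun k hk => ?_
  have hk' : k ≤ m := by have := Finset.mem_range.mp hk; omega
  rw [← Finset.mul_sum]
  congr 1
  rw [gsum m k t (m + t + 2) (by omega), if_pos (by omega),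
    show m + 2 + t - (m + t + 2) = 0 by omega,
    show m + t + 2 - 1 - k = m + t + 1 - k by omega,
    show m + t + 1 - k - t = m - k + 1 by omega]
  rw [show (0 * t : ℕ) = 0 by omega, pow_zero, one_mul]
  exact (qBinom_eq_gb (by omega)).symm


end
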